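/- arXiv:2102.10381 — 3 statements merged into one kernel-verified Lean document; each statement's English description precedes it below -/
import Mathlib

section
/- For every bounded set H ⊂ R^{N+1} there exists a positive constant c_H such that ‖(x,t) ∘ (ξ,τ)‖_K ≤ c_H (‖(x,t)‖_K + ‖(ξ,τ)‖_K) for all (x,t), (ξ,τ) ∈ H, where ∘ is the Kolmogorov group law. -/
open NormedSpace

/-- The Kolmogorov group law `(x,t) ∘ (ξ,τ) = (ξ + E(τ)x, t + τ)` with `E(t) = exp(-tB)`. -/
noncomputable def KolOp {N : ℕ} (B : Matrix (Fin N) (Fin N) ℝ)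
    (z ζ : (Fin N → ℝ) × ℝ) : (Fin N → ℝ) × ℝ :=
  (ζ.1 + (exp ((-ζ.2) • B)).mulVec z.1, z.2 + ζ.2)

/-- The homogeneous semi-norm `‖(x,t)‖_K = max{ |x_1|^{1/α_1}, …, |x_N|^{1/α_N}, |t|^{1/2} }`,
where the exponents `α i = 2 * lvl i + 1` come from the block structure of `B`. -/
noncomputable def normK {N : ℕ} (α : Fin N → ℕ) (z : (Fin N → ℝ) × ℝ) : ℝ :=
  max (⨆ i : Fin N, |z.1 i| ^ ((α i : ℝ)⁻¹)) (|z.2| ^ ((2 : ℝ)⁻¹))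

section Helpers

open Nat

lemma rpow_inv_le {a C : ℝ} {n : ℕ} (hn : n ≠ 0) (hC : 1 ≤ C) (h : |a| ≤ C) :
    |a| ^ ((n : ℝ)⁻¹) ≤ C := by
  have h1 : |a| ^ ((n : ℝ)⁻¹) ≤ C ^ ((n : ℝ)⁻¹) :=
    Real.rpow_le_rpow (abs_nonneg a) h (by positivity)
  have h2 : C ^ ((n : ℝ)⁻¹) ≤ C ^ (1 : ℝ) :=
    Real.rpow_le_rpow_of_exponent_le hC
      (inv_le_one_of_one_le₀ (by exact_mod_cast Nat.one_le_iff_ne_zero.mpr hn))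
  rw [Real.rpow_one] at h2
  exact h1.trans h2

lemma abs_rpow_inv_le {a s C : ℝ} {n : ℕ} (hn : n ≠ 0) (hs : 0 ≤ s) (hC : 1 ≤ C)
    (h : |a| ≤ C * s ^ n) : |a| ^ ((n : ℝ)⁻¹) ≤ C * s := by
  have hn' : (0:ℝ) < (n : ℝ) := by exact_mod_cast Nat.pos_of_ne_zero hn
  have h1 : |a| ^ ((n : ℝ)⁻¹) ≤ (C * s ^ n) ^ ((n : ℝ)⁻¹) :=
    Real.rpow_le_rpow (abs_nonneg a) h (by positivity)
  have h2 : (C * s ^ n) ^ ((n : ℝ)⁻¹) = C ^ ((n : ℝ)⁻¹) * (s ^ n) ^ ((n : ℝ)⁻¹) :=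
    Real.mul_rpow (by linarith) (by positivity)
  have h3 : (s ^ n) ^ ((n : ℝ)⁻¹) = s := by
    rw [← Real.rpow_natCast s n, ← Real.rpow_mul hs, mul_inv_cancel₀ hn'.ne', Real.rpow_one]
  have h4 : C ^ ((n : ℝ)⁻¹) ≤ C := by
    have := Real.rpow_le_rpow_of_exponent_le hC
      (show (n : ℝ)⁻¹ ≤ 1 from inv_le_one_of_one_le₀ (by exact_mod_cast Nat.one_le_iff_ne_zero.mpr hn))
    rwa [Real.rpow_one] at this
  calc |a| ^ ((n : ℝ)⁻¹) ≤ C ^ ((n : ℝ)⁻¹) * s := by rw [← h3]; exact h1.trans_eq h2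
    _ ≤ C * s := mul_le_mul_of_nonneg_right h4 hs

lemma le_pow_of_rpow_inv_le {a c : ℝ} {n : ℕ} (hn : n ≠ 0) (hc : 0 ≤ c)
    (h : |a| ^ ((n : ℝ)⁻¹) ≤ c) : |a| ≤ c ^ n := by
  have hn' : (0:ℝ) < (n : ℝ) := by exact_mod_cast Nat.pos_of_ne_zero hn
  have h1 : (|a| ^ ((n : ℝ)⁻¹)) ^ (n : ℝ) ≤ c ^ (n : ℝ) :=
    Real.rpow_le_rpow (Real.rpow_nonneg (abs_nonneg a) _) h hn'.le
  rwa [← Real.rpow_mul (abs_nonneg a), inv_mul_cancel₀ hn'.ne', Real.rpow_one,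
    Real.rpow_natCast] at h1

lemma powB_entry_zero {N : ℕ} (lvl : Fin N → ℕ) (B : Matrix (Fin N) (Fin N) ℝ)
    (hB : ∀ i j, lvl j + 1 < lvl i → B i j = 0) :
    ∀ n (i j : Fin N), lvl j + n < lvl i → (B ^ n) i j = 0 := by
  intro n
  induction n with
  | zero =>
    intro i j h
    rw [pow_zero, Matrix.one_apply_ne]
    intro hij; rw [hij] at h; omega
  | succ n ih =>
    intro i j h
    rw [pow_succ, Matrix.mul_apply]
    refine Finset.sum_eq_zero fun k _ => ?_
    by_cases hk : lvl k + n < lvl i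
    · rw [ih i k hk, zero_mul]
    · rw [hB k j (by omega), mul_zero]

lemma powB_entry_bound {N : ℕ} (B : Matrix (Fin N) (Fin N) ℝ) (b K : ℝ) (hb0 : 0 ≤ b)
    (hb : ∀ i j, |B i j| ≤ b) (hK1 : 1 ≤ K) (hNb : (N : ℝ) * b ≤ K) :
    ∀ n (i j : Fin N), |(B ^ n) i j| ≤ K ^ n := by
  have hK0 : (0:ℝ) ≤ K := by linarith
  intro n
  induction n with
  | zero =>
    intro i j
    rw [pow_zero, pow_zero, Matrix.one_apply]
    split <;> simp
  | succ n ih =>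
    intro i j
    rw [pow_succ, Matrix.mul_apply]
    calc |∑ k, (B ^ n) i k * B k j| ≤ ∑ k, |(B ^ n) i k * B k j| :=
          Finset.abs_sum_le_sum_abs _ _
      _ ≤ ∑ _k : Fin N, K ^ n * b := by
          refine Finset.sum_le_sum fun k _ => ?_
          rw [abs_mul]
          exact mul_le_mul (ih i k) (hb k j) (abs_nonneg _) (by positivity)
      _ = (N : ℝ) * (K ^ n * b) := by
          rw [Finset.sum_const, Finset.card_univ, Fintype.card_fin, nsmul_eq_mul]
      _ ≤ K ^ (n + 1) := by
          have hKn : (0:ℝ) ≤ K ^ n := by positivity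
          calc (N : ℝ) * (K ^ n * b) = K ^ n * ((N : ℝ) * b) := by ring
            _ ≤ K ^ n * K := mul_le_mul_of_nonneg_left hNb hKn
            _ = K ^ (n + 1) := by rw [pow_succ]

set_option maxHeartbeats 1000000 in
lemma exp_entry_bound {N : ℕ} (lvl : Fin N → ℕ) (B : Matrix (Fin N) (Fin N) ℝ)
    (hB : ∀ i j, lvl j + 1 < lvl i → B i j = 0)
    (K T : ℝ) (hK : 1 ≤ K) (hT : 0 ≤ T)
    (hKB : ∀ n (i j : Fin N), |(B ^ n) i j| ≤ K ^ n)
    (τ : ℝ) (hτ : |τ| ≤ T) (i j : Fin N) :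
    |(exp ((-τ) • B)) i j| ≤
      |τ| ^ (lvl i - lvl j) * (K ^ (lvl i - lvl j) * ∑' n : ℕ, (1 + T * K) ^ n / n !) := by
  set m : ℕ := lvl i - lvl j with hm
  set A : Matrix (Fin N) (Fin N) ℝ := (-τ) • B with hA
  set g : ℕ → ℝ := fun n => ((n ! : ℝ))⁻¹ * ((-τ) ^ n * (B ^ n) i j) with hg
  have hK0 : (0:ℝ) ≤ K := by linarith
  have hbase1 : (1:ℝ) ≤ 1 + T * K := by nlinarith
  have hentry : ∀ (i' j' : Fin N) n,
      (((n ! : ℝ))⁻¹ • A ^ n) i' j' = ((n ! : ℝ))⁻¹ * ((-τ) ^ n * (B ^ n) i' j') := by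
    intro i' j' n
    rw [hA, smul_pow]
    simp [Matrix.smul_apply, smul_smul]
  -- generic entrywise summable bound
  have hgen : ∀ (i' j' : Fin N) n,
      |((n ! : ℝ))⁻¹ * ((-τ) ^ n * (B ^ n) i' j')| ≤ (T * K) ^ n / n ! := by
    intro i' j' n
    rw [abs_mul, abs_mul, abs_pow, abs_neg]
    have h1 : |τ| ^ n * |(B ^ n) i' j'| ≤ (T * K) ^ n := by
      rw [mul_pow]
      exact mul_le_mul (pow_le_pow_left₀ (abs_nonneg τ) hτ n) (hKB n i' j')
        (abs_nonneg _) (by positivity)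
    have h2 : |((n ! : ℝ))⁻¹| = ((n ! : ℝ))⁻¹ := abs_of_nonneg (by positivity)
    rw [h2, div_eq_inv_mul]
    exact mul_le_mul_of_nonneg_left h1 (by positivity)
  have hsummaj : Summable fun n : ℕ => (T * K) ^ n / (n ! : ℝ) :=
    Real.summable_pow_div_factorial (T * K)
  have hsum_entry : ∀ (i' j' : Fin N),
      Summable fun n : ℕ => ((n ! : ℝ))⁻¹ * ((-τ) ^ n * (B ^ n) i' j') := by
    intro i' j'
    exact Summable.of_norm_bounded hsummaj (fun n => hgen i' j' n)
  have hF : Summable fun n : ℕ => ((n ! : ℝ))⁻¹ • A ^ n := by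
    refine Pi.summable.mpr ?_
    intro i'
    rw [Pi.summable]
    intro j'
    have := hsum_entry i' j'
    refine this.congr fun n => ?_
    exact (hentry i' j' n).symm
  have hexpA : exp A = ∑' n : ℕ, ((n ! : ℝ))⁻¹ • A ^ n := by rw [exp_eq_tsum (𝕂 := ℝ)]
  have hexp : (exp A) i j = ∑' n : ℕ, g n := by
    have e1 : (∑' n : ℕ, ((n ! : ℝ))⁻¹ • A ^ n) i = ∑' n : ℕ, (((n ! : ℝ))⁻¹ • A ^ n) i :=
      tsum_apply hF
    rw [hexpA, e1, tsum_apply ((Pi.summable).mp hF i)]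
    exact tsum_congr fun n => hentry i j n
  -- the refined majorant
  have hgu : ∀ n, |g n| ≤ |τ| ^ m * (K ^ m * ((1 + T * K) ^ n / n !)) := by
    intro n
    by_cases hnm : n < m
    · have hz : (B ^ n) i j = 0 := powB_entry_zero lvl B hB n i j (by omega)
      rw [hg]
      simp only [hz, mul_zero, abs_zero]
      positivity
    · push_neg at hnm
      have h1 : |g n| = ((n ! : ℝ))⁻¹ * (|τ| ^ n * |(B ^ n) i j|) := by
        rw [hg]
        rw [abs_mul, abs_mul, abs_pow, abs_neg, abs_of_nonneg (show (0:ℝ) ≤ ((n ! : ℝ))⁻¹ by positivity)]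
      rw [h1]
      have h2 : |τ| ^ n * |(B ^ n) i j| ≤ |τ| ^ m * (K ^ m * (1 + T * K) ^ n) := by
        have e1 : |τ| ^ n = |τ| ^ m * |τ| ^ (n - m) := by
          rw [← pow_add]; congr 1; omega
        have e2 : (K:ℝ) ^ n = K ^ m * K ^ (n - m) := by
          rw [← pow_add]; congr 1; omega
        calc |τ| ^ n * |(B ^ n) i j| ≤ |τ| ^ n * K ^ n :=
              mul_le_mul_of_nonneg_left (hKB n i j) (by positivity)
          _ = |τ| ^ m * K ^ m * (|τ| ^ (n-m) * K ^ (n-m)) := by rw [e1, e2]; ring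
          _ = |τ| ^ m * K ^ m * (|τ| * K) ^ (n-m) := by rw [mul_pow]
          _ ≤ |τ| ^ m * K ^ m * (1 + T * K) ^ (n-m) := by
              refine mul_le_mul_of_nonneg_left (pow_le_pow_left₀ (by positivity) ?_ _) (by positivity)
              nlinarith [abs_nonneg τ]
          _ ≤ |τ| ^ m * K ^ m * (1 + T * K) ^ n := by
              refine mul_le_mul_of_nonneg_left (pow_le_pow_right₀ hbase1 (by omega)) (by positivity)
          _ = |τ| ^ m * (K ^ m * (1 + T * K) ^ n) := by ring
      calc ((n ! : ℝ))⁻¹ * (|τ| ^ n * |(B ^ n) i j|)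
          ≤ ((n ! : ℝ))⁻¹ * (|τ| ^ m * (K ^ m * (1 + T * K) ^ n)) :=
            mul_le_mul_of_nonneg_left h2 (by positivity)
        _ = |τ| ^ m * (K ^ m * ((1 + T * K) ^ n / n !)) := by
            rw [div_eq_inv_mul]; ring
  have hsumu : Summable fun n : ℕ => |τ| ^ m * (K ^ m * ((1 + T * K) ^ n / n !)) := by
    refine Summable.mul_left _ (Summable.mul_left _ ?_)
    exact Real.summable_pow_div_factorial (1 + T * K)
  have hsumg : Summable fun n => |g n| := (hsum_entry i j).abs
  have hsumg' : Summable fun n => ‖g n‖ := by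
    simpa only [Real.norm_eq_abs] using hsumg
  have h1 : |(exp A) i j| ≤ ∑' n, |g n| := by
    rw [hexp, ← Real.norm_eq_abs]
    simpa only [Real.norm_eq_abs] using norm_tsum_le_tsum_norm hsumg' 
  have h2 : ∑' n, |g n| ≤ ∑' n : ℕ, |τ| ^ m * (K ^ m * ((1 + T * K) ^ n / n !)) :=
    Summable.tsum_le_tsum hgu hsumg hsumu
  have h3 : ∑' n : ℕ, |τ| ^ m * (K ^ m * ((1 + T * K) ^ n / n !))
      = |τ| ^ m * (K ^ m * ∑' n : ℕ, (1 + T * K) ^ n / n !) := by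
    rw [tsum_mul_left, tsum_mul_left]
  exact (h1.trans h2).trans_eq h3

end Helpers

/-- On every bounded set `H` there is `c_H > 0` with
`‖z ∘ ζ‖_K ≤ c_H (‖z‖_K + ‖ζ‖_K)` for all `z, ζ ∈ H`.  Here `B` has the block lower
Hessenberg form [H.1]: `B i j = 0` whenever the level of `i` exceeds the level of `j` plus one,
and the homogeneity exponents are `α i = 2 * lvl i + 1`. -/
theorem normK_op_pseudo_triangle {N : ℕ} (lvl : Fin N → ℕ)
    (B : Matrix (Fin N) (Fin N) ℝ) (hB : ∀ i j, lvl j + 1 < lvl i → B i j = 0)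
    (H : Set ((Fin N → ℝ) × ℝ)) (hH : Bornology.IsBounded H) :
    ∃ c : ℝ, 0 < c ∧ ∀ z ∈ H, ∀ ζ ∈ H,
      normK (fun i => 2 * lvl i + 1) (KolOp B z ζ) ≤
        c * (normK (fun i => 2 * lvl i + 1) z + normK (fun i => 2 * lvl i + 1) ζ) := by
  classical
  obtain ⟨r, hr⟩ := hH.subset_closedBall 0
  set R : ℝ := max r 1 with hRdef
  have hR1 : (1:ℝ) ≤ R := le_max_right r 1
  have hR0 : (0:ℝ) ≤ R := by linarith
  have hmem : ∀ z ∈ H, (∀ i, |z.1 i| ≤ R) ∧ |z.2| ≤ R := by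
    intro w hw
    have hw' : ‖w‖ ≤ r := by
      have := hr hw
      rwa [Metric.mem_closedBall, dist_zero_right] at this
    refine ⟨fun i => ?_, ?_⟩
    · calc |w.1 i| = ‖w.1 i‖ := (Real.norm_eq_abs _).symm
        _ ≤ ‖w.1‖ := norm_le_pi_norm w.1 i
        _ ≤ ‖w‖ := norm_fst_le w
        _ ≤ R := hw'.trans (le_max_left r 1)
    · calc |w.2| = ‖w.2‖ := (Real.norm_eq_abs _).symm
        _ ≤ ‖w‖ := norm_snd_le w
        _ ≤ R := hw'.trans (le_max_left r 1)
  set α : Fin N → ℕ := fun i => 2 * lvl i + 1 with hα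
  have hα0 : ∀ i, α i ≠ 0 := fun i => by simp [hα]
  have h2cast : ((2:ℕ):ℝ) = (2:ℝ) := by norm_num
  have h2ne : (2:ℕ) ≠ 0 := by norm_num
  have hKnn : ∀ w : (Fin N → ℝ) × ℝ, 0 ≤ normK α w := fun w =>
    le_trans (Real.rpow_nonneg (abs_nonneg _) _) (le_max_right _ _)
  have hKleR : ∀ w ∈ H, normK α w ≤ R := by
    intro w hw
    refine max_le (Real.iSup_le (fun i => ?_) hR0) ?_
    · exact rpow_inv_le (hα0 i) hR1 ((hmem w hw).1 i)
    · rw [← h2cast]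
      exact rpow_inv_le h2ne hR1 (hmem w hw).2
  have hcomp1 : ∀ w : (Fin N → ℝ) × ℝ, ∀ i, |w.1 i| ≤ (normK α w) ^ (α i) := by
    intro w i
    refine le_pow_of_rpow_inv_le (hα0 i) (hKnn w) ?_
    exact le_trans
      (le_ciSup (f := fun i => |w.1 i| ^ ((α i : ℝ)⁻¹))
        (Set.Finite.bddAbove (Set.finite_range _)) i) (le_max_left _ _)
  have hcomp2 : ∀ w : (Fin N → ℝ) × ℝ, |w.2| ≤ (normK α w) ^ 2 := by
    intro w
    refine le_pow_of_rpow_inv_le h2ne (hKnn w) ?_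
    rw [h2cast]
    exact le_max_right _ _
  -- constants
  set b : ℝ := (∑ i : Fin N, ∑ j : Fin N, |B i j|) + 1 with hbdef
  have hb0 : (0:ℝ) ≤ b := by positivity
  have hb : ∀ i j, |B i j| ≤ b := by
    intro i j
    have h1 : |B i j| ≤ ∑ j' : Fin N, |B i j'| :=
      Finset.single_le_sum (f := fun j' => |B i j'|) (fun k _ => abs_nonneg _)
        (Finset.mem_univ j)
    have h2 : ∑ j' : Fin N, |B i j'| ≤ ∑ i' : Fin N, ∑ j' : Fin N, |B i' j'| :=
      Finset.single_le_sum (f := fun i' => ∑ j' : Fin N, |B i' j'|)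
        (fun k _ => Finset.sum_nonneg fun _ _ => abs_nonneg _) (Finset.mem_univ i)
    rw [hbdef]; linarith
  have hNb0 : (0:ℝ) ≤ (N:ℝ) * b := mul_nonneg (Nat.cast_nonneg N) hb0
  set K : ℝ := (N:ℝ) * b + 1 with hKdef
  have hK1 : (1:ℝ) ≤ K := by rw [hKdef]; linarith
  have hK0 : (0:ℝ) ≤ K := by linarith
  have hKB : ∀ n (i j : Fin N), |(B ^ n) i j| ≤ K ^ n :=
    powB_entry_bound B b K hb0 hb hK1 (by rw [hKdef]; linarith)
  set L : ℕ := Finset.univ.sup lvl with hLdef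
  have hlvlL : ∀ i, lvl i ≤ L := fun i => Finset.le_sup (Finset.mem_univ i)
  set D : ℝ := ∑' (n : ℕ), (1 + R * K) ^ n / (Nat.factorial n : ℝ) with hDdef
  have hD0 : 0 ≤ D := tsum_nonneg fun n => by positivity
  set C₁ : ℝ := K ^ L * D + 1 with hC1def
  have hKL0 : (0:ℝ) ≤ K ^ L * D := mul_nonneg (pow_nonneg hK0 L) hD0
  have hC1 : 1 ≤ C₁ := by rw [hC1def]; linarith
  have hC10 : 0 ≤ C₁ := by linarith
  set C₂ : ℝ := (2 * R) ^ (4 * L + 1) with hC2def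
  have h2R1 : (1:ℝ) ≤ 2 * R := by linarith
  have hC2 : 1 ≤ C₂ := by
    calc (1:ℝ) = 1 ^ (4 * L + 1) := (one_pow _).symm
      _ ≤ (2 * R) ^ (4 * L + 1) := pow_le_pow_left₀ zero_le_one h2R1 _
  have hC20 : 0 ≤ C₂ := by linarith
  have hNC0 : (0:ℝ) ≤ (N:ℝ) * (C₁ * C₂) :=
    mul_nonneg (Nat.cast_nonneg N) (mul_nonneg hC10 hC20)
  set c : ℝ := (N:ℝ) * (C₁ * C₂) + 1 with hcdef
  have hc1 : 1 ≤ c := by rw [hcdef]; linarith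
  refine ⟨c, by linarith, ?_⟩
  intro z hz ζ hζ
  set s : ℝ := normK α z + normK α ζ with hsdef
  have hs0 : 0 ≤ s := add_nonneg (hKnn z) (hKnn ζ)
  have hs2R : s ≤ 2 * R := by
    have h1 := hKleR z hz
    have h2 := hKleR ζ hζ
    rw [hsdef]; linarith
  have hz1 : ∀ j, |z.1 j| ≤ s ^ (α j) := fun j =>
    (hcomp1 z j).trans (pow_le_pow_left₀ (hKnn z) (by rw [hsdef]; linarith [hKnn ζ]) _)
  have hζ1 : ∀ i, |ζ.1 i| ≤ s ^ (α i) := fun i =>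
    (hcomp1 ζ i).trans (pow_le_pow_left₀ (hKnn ζ) (by rw [hsdef]; linarith [hKnn z]) _)
  have hζ2 : |ζ.2| ≤ s ^ 2 :=
    (hcomp2 ζ).trans (pow_le_pow_left₀ (hKnn ζ) (by rw [hsdef]; linarith [hKnn z]) _)
  have htime : |z.2 + ζ.2| ≤ s ^ 2 := by
    have h1 := hcomp2 z
    have h2 := hcomp2 ζ
    have h3 := abs_add_le z.2 ζ.2
    have e : (normK α z) ^ 2 + (normK α ζ) ^ 2 ≤ s ^ 2 := by
      rw [hsdef]; nlinarith [hKnn z, hKnn ζ]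
    linarith
  -- exp entry bounds
  have hE : ∀ i j, |(exp ((-ζ.2) • B)) i j| ≤ C₁ * s ^ (2 * (lvl i - lvl j)) := by
    intro i j
    have h1 := exp_entry_bound lvl B hB K R hK1 hR0 hKB ζ.2 (hmem ζ hζ).2 i j
    have hmL : lvl i - lvl j ≤ L := le_trans (Nat.sub_le _ _) (hlvlL i)
    have h2 : |ζ.2| ^ (lvl i - lvl j) ≤ (s ^ 2) ^ (lvl i - lvl j) :=
      pow_le_pow_left₀ (abs_nonneg _) hζ2 _
    have h3 : K ^ (lvl i - lvl j) * D ≤ C₁ := by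
      have h4 : K ^ (lvl i - lvl j) ≤ K ^ L := pow_le_pow_right₀ hK1 hmL
      have h5 : K ^ (lvl i - lvl j) * D ≤ K ^ L * D := mul_le_mul_of_nonneg_right h4 hD0
      rw [hC1def]; linarith
    calc |(exp ((-ζ.2) • B)) i j|
        ≤ |ζ.2| ^ (lvl i - lvl j) * (K ^ (lvl i - lvl j) * D) := by rw [hDdef] at *; exact h1
      _ ≤ (s ^ 2) ^ (lvl i - lvl j) * C₁ :=
          mul_le_mul h2 h3 (mul_nonneg (pow_nonneg hK0 _) hD0) (by positivity)
      _ = C₁ * s ^ (2 * (lvl i - lvl j)) := by rw [pow_mul]; ring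
  -- spatial estimate
  have hspace : ∀ i, |(ζ.1 + (exp ((-ζ.2) • B)).mulVec z.1) i| ≤ c * s ^ (α i) := by
    intro i
    have hmv : (exp ((-ζ.2) • B)).mulVec z.1 i
        = ∑ j, (exp ((-ζ.2) • B)) i j * z.1 j := by
      simp [Matrix.mulVec, dotProduct]
    have hterm : ∀ j, |(exp ((-ζ.2) • B)) i j * z.1 j| ≤ (C₁ * C₂) * s ^ (α i) := by
      intro j
      rw [abs_mul]
      have h1 : |(exp ((-ζ.2) • B)) i j| * |z.1 j|
          ≤ (C₁ * s ^ (2 * (lvl i - lvl j))) * s ^ (α j) :=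
        mul_le_mul (hE i j) (hz1 j) (abs_nonneg _)
          (mul_nonneg hC10 (pow_nonneg hs0 _))
      have he : 2 * (lvl i - lvl j) + α j = α i + (2 * (lvl i - lvl j) + α j - α i) := by
        simp only [hα]; omega
      have h2 : s ^ (2 * (lvl i - lvl j)) * s ^ (α j)
          = s ^ (α i) * s ^ (2 * (lvl i - lvl j) + α j - α i) := by
        rw [← pow_add, ← pow_add, ← he]
      have h3 : s ^ (2 * (lvl i - lvl j) + α j - α i) ≤ C₂ := by
        calc s ^ (2 * (lvl i - lvl j) + α j - α i)
            ≤ (2 * R) ^ (2 * (lvl i - lvl j) + α j - α i) := pow_le_pow_left₀ hs0 hs2R _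
          _ ≤ (2 * R) ^ (4 * L + 1) := by
              refine pow_le_pow_right₀ h2R1 ?_
              have hi := hlvlL i
              have hj := hlvlL j
              simp only [hα]; omega
      calc |(exp ((-ζ.2) • B)) i j| * |z.1 j|
          ≤ C₁ * s ^ (2 * (lvl i - lvl j)) * s ^ (α j) := h1
        _ = C₁ * s ^ (α i) * s ^ (2 * (lvl i - lvl j) + α j - α i) := by
            rw [mul_assoc, h2]; ring
        _ ≤ C₁ * s ^ (α i) * C₂ :=
            mul_le_mul_of_nonneg_left h3 (mul_nonneg hC10 (pow_nonneg hs0 _))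
        _ = (C₁ * C₂) * s ^ (α i) := by ring
    calc |(ζ.1 + (exp ((-ζ.2) • B)).mulVec z.1) i|
        = |ζ.1 i + ∑ j, (exp ((-ζ.2) • B)) i j * z.1 j| := by rw [Pi.add_apply, hmv]
      _ ≤ |ζ.1 i| + |∑ j, (exp ((-ζ.2) • B)) i j * z.1 j| := abs_add_le _ _
      _ ≤ |ζ.1 i| + ∑ j, |(exp ((-ζ.2) • B)) i j * z.1 j| :=
          add_le_add_right (Finset.abs_sum_le_sum_abs _ _) _
      _ ≤ s ^ (α i) + ∑ _j : Fin N, (C₁ * C₂) * s ^ (α i) :=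
          add_le_add (hζ1 i) (Finset.sum_le_sum fun j _ => hterm j)
      _ = s ^ (α i) + (N:ℝ) * ((C₁ * C₂) * s ^ (α i)) := by
          rw [Finset.sum_const, Finset.card_univ, Fintype.card_fin, nsmul_eq_mul]
      _ = c * s ^ (α i) := by rw [hcdef]; ring
  -- conclusion
  show normK α (KolOp B z ζ) ≤ c * s
  have hcs0 : 0 ≤ c * s := mul_nonneg (by linarith) hs0
  refine max_le (Real.iSup_le (fun i => ?_) hcs0) ?_
  · exact abs_rpow_inv_le (hα0 i) hs0 hc1 (hspace i)
  · have h1 : |z.2 + ζ.2| ≤ c * s ^ 2 :=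
      htime.trans (le_mul_of_one_le_left (by positivity) hc1)
    have h2 := abs_rpow_inv_le h2ne hs0 hc1 h1
    rw [h2cast] at h2
    exact h2
end

section
/- If the matrix B has the block lower-triangular form B_0 with only the subdiagonal blocks B_1,…,B_κ nonzero (all other blocks zero), then the dilations distribute over the group law: δ_r(z ∘ ζ) = (δ_r z) ∘ (δ_r ζ) for every z, ζ ∈ R^{N+1} and every r > 0. -/
open NormedSpace

/-- The dilation `δ_r = diag(r I_{m_0}, r³ I_{m_1}, …, r^{2κ+1} I_{m_κ}, r²)`, encoded via a
level function `lvl`: the coordinate `i` (at level `lvl i`) is scaled by `r^{2 lvl i + 1}`. -/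
def dil {N : ℕ} (lvl : Fin N → ℕ) (r : ℝ) (z : (Fin N → ℝ) × ℝ) : (Fin N → ℝ) × ℝ :=
  (fun i => r ^ (2 * lvl i + 1) * z.1 i, r ^ 2 * z.2)

/-- If `B = B₀` has only the subdiagonal blocks nonzero (i.e. `B i j ≠ 0` forces
`lvl i = lvl j + 1`), then the dilations distribute over the group law:
`δ_r(z ∘ ζ) = (δ_r z) ∘ (δ_r ζ)` for all `z, ζ` and `r > 0`. -/
theorem dil_distrib_over_op {N : ℕ} (lvl : Fin N → ℕ)
    (B : Matrix (Fin N) (Fin N) ℝ) (hB : ∀ i j, lvl i ≠ lvl j + 1 → B i j = 0)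
    {r : ℝ} (hr : 0 < r) (z ζ : (Fin N → ℝ) × ℝ) :
    dil lvl r (KolOp B z ζ) = KolOp B (dil lvl r z) (dil lvl r ζ) := by
  set d : Fin N → ℝ := fun i => r ^ (2 * lvl i + 1) with hd
  set D : Matrix (Fin N) (Fin N) ℝ := Matrix.diagonal d with hDdef
  have hdne : ∀ i, d i ≠ 0 := fun i => pow_ne_zero _ hr.ne'
  have hDdet : IsUnit D.det := by
    rw [hDdef, Matrix.det_diagonal]
    exact (Finset.prod_ne_zero_iff.2 fun i _ => hdne i).isUnit
  have hDunit : IsUnit D := (Matrix.isUnit_iff_isUnit_det _).2 hDdet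
  -- key intertwining relation
  have hDB : D * B = (r ^ 2 • B) * D := by
    ext i j
    simp only [hDdef, Matrix.diagonal_mul, Matrix.mul_diagonal, Matrix.smul_apply,
      Matrix.smul_mul, smul_eq_mul]
    by_cases h : lvl i = lvl j + 1
    · rw [hd]
      simp only [h]
      ring
    · rw [hB i j h]; ring
  have hconj : D * ((-ζ.2) • B) * D⁻¹ = (-(r ^ 2 * ζ.2)) • B := by
    have : D * ((-ζ.2) • B) = ((-ζ.2) • (r ^ 2 • B)) * D := by
      rw [Matrix.mul_smul, hDB]; simp [Matrix.smul_mul]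
    rw [this, Matrix.mul_assoc, Matrix.mul_nonsing_inv _ hDdet, Matrix.mul_one,
      smul_smul]
    ring_nf
  have hexp : exp ((-(r ^ 2 * ζ.2)) • B) = D * exp ((-ζ.2) • B) * D⁻¹ := by
    rw [← hconj, Matrix.exp_conj _ _ hDunit]
  have hvec : ∀ v : Fin N → ℝ, D.mulVec v = fun i => d i * v i := by
    intro v; funext i; simp [hDdef, Matrix.mulVec_diagonal]
  refine Prod.ext ?_ ?_
  · show (fun i => d i * (ζ.1 + (exp ((-ζ.2) • B)).mulVec z.1) i)
      = (fun i => d i * ζ.1 i) + (exp ((-(r ^ 2 * ζ.2)) • B)).mulVec (fun i => d i * z.1 i)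
    rw [hexp, ← hvec z.1, ← hvec ζ.1, ← hvec, Matrix.mulVec_mulVec,
      Matrix.mul_assoc (D * exp ((-ζ.2) • B)) D⁻¹ D, Matrix.nonsing_inv_mul _ hDdet,
      Matrix.mul_one, Matrix.mulVec_add, Matrix.mulVec_mulVec]
  · show r ^ 2 * (z.2 + ζ.2) = r ^ 2 * z.2 + r ^ 2 * ζ.2
    ring
end

section
/- For the dilation-invariant matrix B_0, the exponential satisfies the scaling identity E(r^2 t) ∘ δ_r = δ_r ∘ E(t) on R^N for all r > 0 and t ∈ R; equivalently, exp(-r^2 t B_0) D_r = D_r exp(-t B_0), where D_r = diag(r I_{m_0}, r^3 I_{m_1}, …, r^{2κ+1} I_{m_κ}). -/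
open NormedSpace

/-- For the dilation-invariant matrix `B₀` (only subdiagonal blocks nonzero, encoded by
`B i j ≠ 0 → lvl i = lvl j + 1`), the matrix exponential satisfies the scaling identity
`exp(-r²t B₀) D_r = D_r exp(-t B₀)`, where `D_r = diag(r I_{m_0}, r³ I_{m_1}, …)` is the
spatial part of the dilation. -/
theorem exp_scaling_identity {N : ℕ} (lvl : Fin N → ℕ)
    (B : Matrix (Fin N) (Fin N) ℝ) (hB : ∀ i j, lvl i ≠ lvl j + 1 → B i j = 0)
    {r : ℝ} (hr : 0 < r) (t : ℝ) :
    exp ((-(r ^ 2 * t)) • B) * Matrix.diagonal (fun i => r ^ (2 * lvl i + 1)) =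
      Matrix.diagonal (fun i => r ^ (2 * lvl i + 1)) * exp ((-t) • B) := by
  set D : Matrix (Fin N) (Fin N) ℝ := Matrix.diagonal (fun i => r ^ (2 * lvl i + 1)) with hD
  have hDu : IsUnit D := by
    rw [hD, Matrix.isUnit_iff_isUnit_det, Matrix.det_diagonal]
    exact (Finset.prod_pos (fun i _ => pow_pos hr _)).ne'.isUnit
  have key : (-(r ^ 2 * t)) • B * D = D * ((-t) • B) := by
    ext i j
    rw [hD, Matrix.mul_diagonal, Matrix.diagonal_mul]
    simp only [Matrix.smul_apply, smul_eq_mul]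
    by_cases h : lvl i = lvl j + 1
    · rw [h]; ring
    · simp [hB i j h]
  have key2 : (-(r ^ 2 * t)) • B = D * ((-t) • B) * D⁻¹ := by
    rw [← key, Matrix.mul_nonsing_inv_cancel_right _ _
      ((Matrix.isUnit_iff_isUnit_det _).mp hDu)]
  have hc := Matrix.exp_conj D ((-t) • B) hDu
  rw [← key2] at hc
  calc exp ((-(r ^ 2 * t)) • B) * D = D * exp ((-t) • B) * D⁻¹ * D := by
        rw [hc]
    _ = D * exp ((-t) • B) := Matrix.nonsing_inv_mul_cancel_right _ _
        ((Matrix.isUnit_iff_isUnit_det _).mp hDu)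
end
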